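/- Let (X_0, X_1, …, X_n) be a random vector whose distribution is a multivariate Gaussian on ℝ^{n+1} whose covariance matrix has all entries nonnegative, and let c_1, …, c_n ≥ 0 be nonnegative real numbers. Then Cov( exp(X_0), exp(−Σ_{i=1}^n c_i exp(X_i)) ) ≤ 0. -/

import Mathlib

open MeasureTheory ProbabilityTheory

/-- The multivariate Gaussian measure on `ℝ^n` (modelled as `Fin n → ℝ`) with mean
vector `m` and positive semidefinite covariance matrix `C`: the pushforward of the
`n`-fold product of standard Gaussians under `x ↦ m + √C x`, where `√C` is the
positive semidefinite square root of `C`. -/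
noncomputable def multivariateGaussian {n : ℕ} (m : Fin n → ℝ)
    {C : Matrix (Fin n) (Fin n) ℝ} (hC : C.PosSemidef) : Measure (Fin n → ℝ) :=
  Measure.map (fun x => m + (hC.1.eigenvectorUnitary * Matrix.diagonal (Real.sqrt ∘ hC.1.eigenvalues) *
      (star hC.1.eigenvectorUnitary : Matrix (Fin n) (Fin n) ℝ)).mulVec x)
    (Measure.pi fun _ : Fin n => gaussianReal 0 1)

/-- The positive semidefinite square root used in `multivariateGaussian`. -/
noncomputable def Matrix.PosSemidef.sqrt {n : ℕ} {C : Matrix (Fin n) (Fin n) ℝ} (hC : C.PosSemidef) :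
    Matrix (Fin n) (Fin n) ℝ :=
  hC.1.eigenvectorUnitary * Matrix.diagonal (Real.sqrt ∘ hC.1.eigenvalues) *
      (star hC.1.eigenvectorUnitary : Matrix (Fin n) (Fin n) ℝ)

lemma Matrix.PosSemidef.isHermitian_sqrt {n : ℕ} {C : Matrix (Fin n) (Fin n) ℝ}
    (hC : C.PosSemidef) : hC.sqrt.IsHermitian := by
  unfold Matrix.PosSemidef.sqrt
  simp only [Matrix.IsHermitian, Matrix.conjTranspose_mul, Matrix.star_eq_conjTranspose,
    Matrix.conjTranspose_conjTranspose, Matrix.diagonal_conjTranspose, star_trivial, Matrix.mul_assoc]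

lemma Matrix.PosSemidef.sqrt_mul_self {n : ℕ} {C : Matrix (Fin n) (Fin n) ℝ}
    (hC : C.PosSemidef) : hC.sqrt * hC.sqrt = C := by
  unfold Matrix.PosSemidef.sqrt
  conv_rhs => rw [hC.1.spectral_theorem, Unitary.conjStarAlgAut_apply]
  have hU : (star hC.1.eigenvectorUnitary : Matrix (Fin n) (Fin n) ℝ) * hC.1.eigenvectorUnitary = 1 :=
    Unitary.coe_star_mul_self _
  have hD : Matrix.diagonal (Real.sqrt ∘ hC.1.eigenvalues) * Matrix.diagonal (Real.sqrt ∘ hC.1.eigenvalues)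
      = Matrix.diagonal (RCLike.ofReal ∘ hC.1.eigenvalues) := by
    rw [Matrix.diagonal_mul_diagonal, RCLike.ofReal_real_eq_id]
    congr 1; funext i
    exact Real.mul_self_sqrt (hC.eigenvalues_nonneg i)
  calc _ = (hC.1.eigenvectorUnitary : Matrix (Fin n) (Fin n) ℝ) * (Matrix.diagonal (Real.sqrt ∘ hC.1.eigenvalues) *
      ((star hC.1.eigenvectorUnitary : Matrix (Fin n) (Fin n) ℝ) * hC.1.eigenvectorUnitary) *
      Matrix.diagonal (Real.sqrt ∘ hC.1.eigenvalues)) * (star hC.1.eigenvectorUnitary : Matrix (Fin n) (Fin n) ℝ) := by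
        simp only [Matrix.mul_assoc]
    _ = _ := by rw [hU, Matrix.mul_one, hD]

open Real NNReal ENNReal Finset

/-- Lintegral of a product of single-coordinate functions over a finite product measure. -/
lemma my_lintegral_pi_prod : ∀ {N : ℕ} (μ : Fin N → Measure ℝ), (∀ i, SigmaFinite (μ i)) →
    ∀ (f : Fin N → ℝ → ℝ≥0∞), (∀ i, Measurable (f i)) →
    ∫⁻ x, ∏ i, f i (x i) ∂Measure.pi μ = ∏ i, ∫⁻ t, f i t ∂μ i := by
  intro N
  induction N with
  | zero =>
    intro μ hμ f hf
    haveI : ∀ i, SigmaFinite (μ i) := hμ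
    simp [lintegral_one, Measure.pi_univ]
  | succ N ih =>
    intro μ hμ f hf
    haveI : ∀ i, SigmaFinite (μ i) := hμ
    have hmp := measurePreserving_piFinSuccAbove μ 0
    have hg : Measurable fun y : Fin N → ℝ => ∏ j, f j.succ (y j) :=
      Finset.measurable_prod _ fun j _ => (hf j.succ).comp (measurable_pi_apply j)
    have key := hmp.lintegral_comp_emb
      ((MeasurableEquiv.piFinSuccAbove (fun _ : Fin (N + 1) => ℝ) 0).measurableEmbedding)
      (fun p : ℝ × (Fin N → ℝ) => f 0 p.1 * ∏ j, f j.succ (p.2 j))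
    have hsA : ∀ j : Fin N, (0 : Fin (N + 1)).succAbove j = j.succ := fun j =>
      Fin.zero_succAbove j
    calc ∫⁻ x, ∏ i, f i (x i) ∂Measure.pi μ
        = ∫⁻ x, f 0 (((MeasurableEquiv.piFinSuccAbove (fun _ : Fin (N + 1) => ℝ) 0) x).1)
            * ∏ j, f j.succ (((MeasurableEquiv.piFinSuccAbove (fun _ : Fin (N + 1) => ℝ) 0) x).2 j)
            ∂Measure.pi μ := by
          refine lintegral_congr fun x => ?_
          have happ : (MeasurableEquiv.piFinSuccAbove (fun _ : Fin (N + 1) => ℝ) 0) x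
              = (x 0, fun j => x ((0 : Fin (N + 1)).succAbove j)) := rfl
          rw [happ]
          simp only [hsA]
          exact (Fin.prod_univ_succ fun i => f i (x i))
      _ = ∫⁻ p : ℝ × (Fin N → ℝ), f 0 p.1 * ∏ j, f j.succ (p.2 j)
            ∂(μ 0).prod (Measure.pi fun j => μ ((0 : Fin (N + 1)).succAbove j)) := key
      _ = (∫⁻ t, f 0 t ∂μ 0) * ∫⁻ y, ∏ j, f j.succ (y j)
            ∂(Measure.pi fun j => μ ((0 : Fin (N + 1)).succAbove j)) :=
          lintegral_prod_mul (hf 0).aemeasurable hg.aemeasurable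
      _ = ∏ i, ∫⁻ t, f i t ∂μ i := by
          have h1 : (fun j : Fin N => μ ((0 : Fin (N + 1)).succAbove j)) = fun j => μ j.succ := by
            funext j; rw [hsA]
          rw [h1, ih (fun j => μ j.succ) (fun j => hμ j.succ) (fun j => f j.succ)
            (fun j => hf j.succ), Fin.prod_univ_succ]

lemma tilt_measurable (c : ℝ) :
    Measurable fun t : ℝ => ENNReal.ofReal (Real.exp (c * t - c ^ 2 / 2)) :=
  (((measurable_const_mul c).sub measurable_const)).exp.ennreal_ofReal

/-- One-dimensional Cameron–Martin / exponential tilting of the standard Gaussian. -/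
lemma gaussianReal_eq_withDensity_tilt (c : ℝ) :
    gaussianReal c 1 = (gaussianReal 0 1).withDensity
      (fun x => ENNReal.ofReal (Real.exp (c * x - c ^ 2 / 2))) := by
  have h1 : (1 : ℝ≥0) ≠ 0 := one_ne_zero
  rw [gaussianReal_of_var_ne_zero _ h1, gaussianReal_of_var_ne_zero _ h1,
    ← withDensity_mul _ (measurable_gaussianPDF 0 1) (tilt_measurable c)]
  congr 1
  funext x
  rw [Pi.mul_apply, gaussianPDF, gaussianPDF, ← ENNReal.ofReal_mul (gaussianPDFReal_nonneg 0 1 x)]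
  congr 1
  unfold gaussianPDFReal
  have hx : rexp (-(x - c) ^ 2 / (2 * ((1 : ℝ≥0) : ℝ)))
      = rexp (-(x - 0) ^ 2 / (2 * ((1 : ℝ≥0) : ℝ))) * rexp (c * x - c ^ 2 / 2) := by
    rw [← Real.exp_add]; congr 1; push_cast; ring
  rw [hx]; ring

/-- The product of tilted standard Gaussians is a tilting of the product standard Gaussian. -/
lemma pi_gaussian_eq_withDensity {N : ℕ} (a : Fin N → ℝ) :
    Measure.pi (fun i => gaussianReal (a i) 1)
      = (Measure.pi fun _ : Fin N => gaussianReal 0 1).withDensity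
        (fun x => ∏ i, ENNReal.ofReal (Real.exp (a i * x i - (a i) ^ 2 / 2))) := by
  refine Measure.pi_eq fun s hs => ?_
  rw [withDensity_apply _ (MeasurableSet.univ_pi hs),
    ← lintegral_indicator (MeasurableSet.univ_pi hs) _]
  have hind : ∀ x : Fin N → ℝ,
      (Set.pi Set.univ s).indicator
        (fun x => ∏ i, ENNReal.ofReal (Real.exp (a i * x i - (a i) ^ 2 / 2))) x
      = ∏ i, (s i).indicator
          (fun t => ENNReal.ofReal (Real.exp (a i * t - (a i) ^ 2 / 2))) (x i) := by
    intro x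
    by_cases hx : x ∈ Set.pi Set.univ s
    · rw [Set.indicator_of_mem hx]
      refine Finset.prod_congr rfl fun i _ => ?_
      rw [Set.indicator_of_mem (hx i (Set.mem_univ i))]
    · rw [Set.indicator_of_notMem hx]
      have : ∃ i, x i ∉ s i := by
        by_contra h
        push_neg at h
        exact hx fun i _ => h i
      obtain ⟨i, hi⟩ := this
      exact (Finset.prod_eq_zero (Finset.mem_univ i)
        (Set.indicator_of_notMem hi _)).symm
  rw [lintegral_congr hind,
    my_lintegral_pi_prod _ (fun _ => inferInstance) _
      (fun i => ((tilt_measurable (a i)).indicator (hs i)))]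
  refine Finset.prod_congr rfl fun i _ => ?_
  rw [lintegral_indicator (hs i) _, gaussianReal_eq_withDensity_tilt (a i),
    withDensity_apply _ (hs i)]

/-- Cameron–Martin formula for the standard Gaussian product measure, in `ℝ≥0∞` form. -/
lemma lintegral_tilt_shift {N : ℕ} (a : Fin N → ℝ) {H : (Fin N → ℝ) → ℝ≥0∞}
    (hH : Measurable H) :
    ∫⁻ x, ENNReal.ofReal (Real.exp (∑ i, a i * x i)) * H x
        ∂(Measure.pi fun _ : Fin N => gaussianReal 0 1)
      = ENNReal.ofReal (Real.exp ((∑ i, (a i) ^ 2) / 2))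
        * ∫⁻ x, H (x + a) ∂(Measure.pi fun _ : Fin N => gaussianReal 0 1) := by
  set γ := (Measure.pi fun _ : Fin N => gaussianReal 0 1)
  have hmp : MeasurePreserving (fun x : Fin N → ℝ => fun i => x i + a i) γ
      (Measure.pi fun i => gaussianReal (a i) 1) := by
    refine measurePreserving_pi _ _ fun i => ⟨measurable_add_const _, ?_⟩
    rw [gaussianReal_map_add_const (a i), zero_add]
  have hshift : ∫⁻ x, H (x + a) ∂γ = ∫⁻ x, H x ∂(Measure.pi fun i => gaussianReal (a i) 1) := by
    rw [← hmp.lintegral_comp hH]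
    rfl
  have hDmeas : Measurable fun x : Fin N → ℝ =>
      ∏ i, ENNReal.ofReal (Real.exp (a i * x i - (a i) ^ 2 / 2)) :=
    Finset.measurable_prod _ fun i _ => (tilt_measurable (a i)).comp (measurable_pi_apply i)
  rw [hshift, pi_gaussian_eq_withDensity a,
    lintegral_withDensity_eq_lintegral_mul _ hDmeas hH]
  simp only [Pi.mul_apply]
  refine Eq.symm ?_
  have hDval : ∀ x : Fin N → ℝ,
      (∏ i, ENNReal.ofReal (Real.exp (a i * x i - (a i) ^ 2 / 2)))
        = ENNReal.ofReal (Real.exp (-((∑ i, (a i) ^ 2) / 2)))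
          * ENNReal.ofReal (Real.exp (∑ i, a i * x i)) := by
    intro x
    have hsum : ∑ i, (a i * x i - (a i) ^ 2 / 2)
        = (-((∑ i, (a i) ^ 2) / 2)) + ∑ i, a i * x i := by
      rw [Finset.sum_sub_distrib, Finset.sum_div]; ring
    rw [← ENNReal.ofReal_prod_of_nonneg (fun i _ => (Real.exp_pos _).le), ← Real.exp_sum,
      hsum, Real.exp_add, ENNReal.ofReal_mul (Real.exp_pos _).le]
  calc ENNReal.ofReal (Real.exp ((∑ i, (a i) ^ 2) / 2))
        * ∫⁻ x, (∏ i, ENNReal.ofReal (Real.exp (a i * x i - (a i) ^ 2 / 2))) * H x ∂γ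
      = ENNReal.ofReal (Real.exp ((∑ i, (a i) ^ 2) / 2))
          * (ENNReal.ofReal (Real.exp (-((∑ i, (a i) ^ 2) / 2)))
            * ∫⁻ x, ENNReal.ofReal (Real.exp (∑ i, a i * x i)) * H x ∂γ) := by
        congr 1
        rw [← lintegral_const_mul (f := fun x => ENNReal.ofReal (Real.exp (∑ i, a i * x i)) * H x)
          _ ((((Finset.measurable_sum Finset.univ
          (fun i _ => (measurable_const_mul (a i)).comp (measurable_pi_apply i)))).exp.ennreal_ofReal).fun_mul hH)]
        refine lintegral_congr fun x => ?_
        rw [hDval x, mul_assoc]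
    _ = ∫⁻ x, ENNReal.ofReal (Real.exp (∑ i, a i * x i)) * H x ∂γ := by
        rw [← mul_assoc, ← ENNReal.ofReal_mul (Real.exp_pos _).le, ← Real.exp_add,
          add_neg_cancel, Real.exp_zero, ENNReal.ofReal_one, one_mul]

/-- Core inequality: for the pushforward of the standard Gaussian by `x ↦ m + A x`, the
covariance of `exp (x 0)` and a `[0,1]`-valued function `G` that decreases under translation
by the vector `A (row₀ A)` is nonpositive. -/
lemma main_core {n : ℕ} (m : Fin (n + 1) → ℝ) (A : Matrix (Fin (n + 1)) (Fin (n + 1)) ℝ)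
    (G : (Fin (n + 1) → ℝ) → ℝ) (hGmeas : Measurable G) (hG0 : ∀ y, 0 ≤ G y)
    (hG1 : ∀ y, G y ≤ 1)
    (hGmono : ∀ y, G (y + A.mulVec (fun k => A 0 k)) ≤ G y) :
    (∫ x, Real.exp (x 0) * G x
        ∂(Measure.map (fun x => m + A.mulVec x)
          (Measure.pi fun _ : Fin (n + 1) => gaussianReal 0 1)))
      ≤ (∫ x, Real.exp (x 0)
          ∂(Measure.map (fun x => m + A.mulVec x)
            (Measure.pi fun _ : Fin (n + 1) => gaussianReal 0 1)))
        * (∫ x, G x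
          ∂(Measure.map (fun x => m + A.mulVec x)
            (Measure.pi fun _ : Fin (n + 1) => gaussianReal 0 1))) := by
  have hTmeas : Measurable fun x : Fin (n + 1) → ℝ => m + A.mulVec x := by
    refine measurable_pi_iff.mpr fun i => ?_
    simp only [Pi.add_apply, Matrix.mulVec, dotProduct]
    exact measurable_const.add (Finset.measurable_sum _ fun k _ =>
      (measurable_const_mul (A i k)).comp (measurable_pi_apply k))
  have hFmeas : Measurable fun y : Fin (n + 1) → ℝ => Real.exp (y 0) :=
    (measurable_pi_apply 0).exp
  have hsmeas : Measurable fun x : Fin (n + 1) → ℝ => ∑ k, A 0 k * x k :=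
    Finset.measurable_sum _ fun k _ => (measurable_const_mul (A 0 k)).comp (measurable_pi_apply k)
  have hFT : ∀ x : Fin (n + 1) → ℝ, Real.exp ((m + A.mulVec x) 0)
      = Real.exp (m 0) * Real.exp (∑ k, A 0 k * x k) := by
    intro x
    rw [← Real.exp_add]
    congr 1
  have key : ∀ (H : (Fin (n + 1) → ℝ) → ℝ≥0∞), Measurable H →
      ∫⁻ x, ENNReal.ofReal (Real.exp ((m + A.mulVec x) 0)) * H x
          ∂(Measure.pi fun _ : Fin (n + 1) => gaussianReal 0 1)
        = ENNReal.ofReal (Real.exp (m 0))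
          * (ENNReal.ofReal (Real.exp ((∑ k, (A 0 k) ^ 2) / 2))
            * ∫⁻ x, H (x + fun k => A 0 k)
                ∂(Measure.pi fun _ : Fin (n + 1) => gaussianReal 0 1)) := by
    intro H hH
    calc ∫⁻ x, ENNReal.ofReal (Real.exp ((m + A.mulVec x) 0)) * H x
          ∂(Measure.pi fun _ : Fin (n + 1) => gaussianReal 0 1)
        = ∫⁻ x, ENNReal.ofReal (Real.exp (m 0))
            * (ENNReal.ofReal (Real.exp (∑ k, A 0 k * x k)) * H x)
            ∂(Measure.pi fun _ : Fin (n + 1) => gaussianReal 0 1) :=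
          lintegral_congr fun x => by
            rw [hFT x, ENNReal.ofReal_mul (Real.exp_pos _).le, mul_assoc]
      _ = ENNReal.ofReal (Real.exp (m 0))
            * ∫⁻ x, ENNReal.ofReal (Real.exp (∑ k, A 0 k * x k)) * H x
              ∂(Measure.pi fun _ : Fin (n + 1) => gaussianReal 0 1) :=
          lintegral_const_mul _ (hsmeas.exp.ennreal_ofReal.mul hH)
      _ = ENNReal.ofReal (Real.exp (m 0))
          * (ENNReal.ofReal (Real.exp ((∑ k, (A 0 k) ^ 2) / 2))
            * ∫⁻ x, H (x + fun k => A 0 k)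
                ∂(Measure.pi fun _ : Fin (n + 1) => gaussianReal 0 1)) := by
          exact congrArg (fun z => ENNReal.ofReal (Real.exp (m 0)) * z)
            (lintegral_tilt_shift (fun k => A 0 k) hH)
  have hHmeas : Measurable fun x : Fin (n + 1) → ℝ =>
      ENNReal.ofReal (G (m + A.mulVec x)) := (hGmeas.comp hTmeas).ennreal_ofReal
  have hI2 : ∫⁻ x, ENNReal.ofReal (Real.exp ((m + A.mulVec x) 0))
      ∂(Measure.pi fun _ : Fin (n + 1) => gaussianReal 0 1)
      = ENNReal.ofReal (Real.exp (m 0)) * ENNReal.ofReal (Real.exp ((∑ k, (A 0 k) ^ 2) / 2)) := by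
    have h := key (fun _ => 1) measurable_const
    simp only [mul_one] at h
    rw [h, lintegral_one, measure_univ, mul_one]
  have hI1 : ∫⁻ x, ENNReal.ofReal (Real.exp ((m + A.mulVec x) 0) * G (m + A.mulVec x))
      ∂(Measure.pi fun _ : Fin (n + 1) => gaussianReal 0 1)
      ≤ (ENNReal.ofReal (Real.exp (m 0)) * ENNReal.ofReal (Real.exp ((∑ k, (A 0 k) ^ 2) / 2)))
        * ∫⁻ x, ENNReal.ofReal (G (m + A.mulVec x))
          ∂(Measure.pi fun _ : Fin (n + 1) => gaussianReal 0 1) := by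
    have heq : ∫⁻ x, ENNReal.ofReal (Real.exp ((m + A.mulVec x) 0) * G (m + A.mulVec x))
        ∂(Measure.pi fun _ : Fin (n + 1) => gaussianReal 0 1)
        = ∫⁻ x, ENNReal.ofReal (Real.exp ((m + A.mulVec x) 0))
            * ENNReal.ofReal (G (m + A.mulVec x))
            ∂(Measure.pi fun _ : Fin (n + 1) => gaussianReal 0 1) :=
      lintegral_congr fun x => ENNReal.ofReal_mul (Real.exp_pos _).le
    rw [heq, key _ hHmeas, mul_assoc]
    refine mul_le_mul_right (mul_le_mul_right ?_ _) _
    refine lintegral_mono fun x => ?_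
    have hx : m + A.mulVec (x + fun k => A 0 k)
        = (m + A.mulVec x) + A.mulVec (fun k => A 0 k) := by
      rw [Matrix.mulVec_add, add_assoc]
    exact ENNReal.ofReal_le_ofReal (by rw [hx]; exact hGmono _)
  have hI3 : ∫⁻ x, ENNReal.ofReal (G (m + A.mulVec x))
      ∂(Measure.pi fun _ : Fin (n + 1) => gaussianReal 0 1) ≤ 1 := by
    calc ∫⁻ x, ENNReal.ofReal (G (m + A.mulVec x))
        ∂(Measure.pi fun _ : Fin (n + 1) => gaussianReal 0 1)
        ≤ ∫⁻ _, 1 ∂(Measure.pi fun _ : Fin (n + 1) => gaussianReal 0 1) :=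
          lintegral_mono fun x => ENNReal.ofReal_le_one.mpr (hG1 _)
      _ = 1 := by rw [lintegral_one, measure_univ]
  have e1 : (∫ x, Real.exp (x 0) * G x
      ∂(Measure.map (fun x => m + A.mulVec x)
        (Measure.pi fun _ : Fin (n + 1) => gaussianReal 0 1)))
      = (∫⁻ x, ENNReal.ofReal (Real.exp ((m + A.mulVec x) 0) * G (m + A.mulVec x))
          ∂(Measure.pi fun _ : Fin (n + 1) => gaussianReal 0 1)).toReal := by
    rw [integral_map hTmeas.aemeasurable ((hFmeas.fun_mul hGmeas).aestronglyMeasurable)]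
    exact integral_eq_lintegral_of_nonneg_ae
      (Filter.Eventually.of_forall fun x => mul_nonneg (Real.exp_pos _).le (hG0 _))
      (((hFmeas.mul hGmeas).comp hTmeas).aestronglyMeasurable)
  have e2 : (∫ x, Real.exp (x 0)
      ∂(Measure.map (fun x => m + A.mulVec x)
        (Measure.pi fun _ : Fin (n + 1) => gaussianReal 0 1)))
      = (∫⁻ x, ENNReal.ofReal (Real.exp ((m + A.mulVec x) 0))
          ∂(Measure.pi fun _ : Fin (n + 1) => gaussianReal 0 1)).toReal := by
    rw [integral_map hTmeas.aemeasurable hFmeas.aestronglyMeasurable]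
    exact integral_eq_lintegral_of_nonneg_ae
      (Filter.Eventually.of_forall fun x => (Real.exp_pos _).le)
      ((hFmeas.comp hTmeas).aestronglyMeasurable)
  have e3 : (∫ x, G x
      ∂(Measure.map (fun x => m + A.mulVec x)
        (Measure.pi fun _ : Fin (n + 1) => gaussianReal 0 1)))
      = (∫⁻ x, ENNReal.ofReal (G (m + A.mulVec x))
          ∂(Measure.pi fun _ : Fin (n + 1) => gaussianReal 0 1)).toReal := by
    rw [integral_map hTmeas.aemeasurable hGmeas.aestronglyMeasurable]
    exact integral_eq_lintegral_of_nonneg_ae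
      (Filter.Eventually.of_forall fun x => hG0 _)
      ((hGmeas.comp hTmeas).aestronglyMeasurable)
  rw [e1, e2, e3, ← ENNReal.toReal_mul]
  have hfin : (∫⁻ x, ENNReal.ofReal (Real.exp ((m + A.mulVec x) 0))
        ∂(Measure.pi fun _ : Fin (n + 1) => gaussianReal 0 1))
      * (∫⁻ x, ENNReal.ofReal (G (m + A.mulVec x))
        ∂(Measure.pi fun _ : Fin (n + 1) => gaussianReal 0 1)) ≠ ⊤ := by
    rw [hI2]
    refine ne_top_of_le_ne_top ?_ (mul_le_mul_right hI3 _)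
    rw [mul_one]
    exact (ENNReal.mul_lt_top ENNReal.ofReal_lt_top ENNReal.ofReal_lt_top).ne
  refine ENNReal.toReal_mono hfin ?_
  rw [hI2]
  exact hI1

/-- **Negative correlation for associated Gaussian vectors.** Let
`(X₀, X₁, …, Xₙ)` be a multivariate Gaussian vector whose covariance matrix has all
entries nonnegative, and let `c₁, …, cₙ ≥ 0`. Then
`Cov(exp(X₀), exp(−∑ᵢ cᵢ exp(Xᵢ))) ≤ 0`, where
`Cov(U, V) = E[U·V] − E[U]·E[V]`. -/
theorem cov_exp_exp_neg_sum_nonpos {n : ℕ} (m : Fin (n + 1) → ℝ)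
    {C : Matrix (Fin (n + 1)) (Fin (n + 1)) ℝ} (hC : C.PosSemidef)
    (hCpos : ∀ i j, 0 ≤ C i j) (c : Fin n → ℝ) (hc : ∀ i, 0 ≤ c i) :
    (∫ x, Real.exp (x 0) * Real.exp (-(∑ i : Fin n, c i * Real.exp (x i.succ)))
        ∂(multivariateGaussian m hC)) -
      (∫ x, Real.exp (x 0) ∂(multivariateGaussian m hC)) *
        (∫ x, Real.exp (-(∑ i : Fin n, c i * Real.exp (x i.succ)))
          ∂(multivariateGaussian m hC)) ≤ 0 := by
  have hAsym : ∀ i j, hC.sqrt i j = hC.sqrt j i := by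
    intro i j
    have h : hC.sqrt.IsHermitian := hC.isHermitian_sqrt
    conv_lhs => rw [← h, Matrix.conjTranspose_apply]
    exact star_trivial _
  have hAa : ∀ i, hC.sqrt.mulVec (fun k => hC.sqrt 0 k) i = C i 0 := by
    intro i
    have h1 : hC.sqrt.mulVec (fun k => hC.sqrt 0 k) i = ∑ k, hC.sqrt i k * hC.sqrt k 0 := by
      simp only [Matrix.mulVec, dotProduct]
      exact Finset.sum_congr rfl fun k _ => by
        show hC.sqrt i k * hC.sqrt 0 k = hC.sqrt i k * hC.sqrt k 0
        rw [hAsym 0 k]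
    rw [h1, ← Matrix.mul_apply, hC.sqrt_mul_self]
  have hGmeas : Measurable fun y : Fin (n + 1) → ℝ =>
      Real.exp (-(∑ i : Fin n, c i * Real.exp (y i.succ))) := by
    apply Measurable.exp
    apply Measurable.neg
    exact Finset.measurable_sum _ fun i _ => ((measurable_pi_apply i.succ).exp.const_mul (c i))
  have hG0 : ∀ y : Fin (n + 1) → ℝ,
      (0 : ℝ) ≤ Real.exp (-(∑ i : Fin n, c i * Real.exp (y i.succ))) :=
    fun _ => (Real.exp_pos _).le
  have hG1 : ∀ y : Fin (n + 1) → ℝ,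
      Real.exp (-(∑ i : Fin n, c i * Real.exp (y i.succ))) ≤ 1 := by
    intro y
    calc Real.exp (-(∑ i : Fin n, c i * Real.exp (y i.succ))) ≤ Real.exp 0 :=
        Real.exp_le_exp.mpr (neg_nonpos.mpr (Finset.sum_nonneg fun i _ =>
          mul_nonneg (hc i) (Real.exp_pos _).le))
      _ = 1 := Real.exp_zero
  have hGmono : ∀ y : Fin (n + 1) → ℝ,
      Real.exp (-(∑ i : Fin n, c i * Real.exp
          ((y + hC.sqrt.mulVec (fun k => hC.sqrt 0 k)) i.succ)))
        ≤ Real.exp (-(∑ i : Fin n, c i * Real.exp (y i.succ))) := by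
    intro y
    apply Real.exp_le_exp.mpr
    apply neg_le_neg
    refine Finset.sum_le_sum fun i _ => ?_
    refine mul_le_mul_of_nonneg_left (Real.exp_le_exp.mpr ?_) (hc i)
    rw [Pi.add_apply, hAa i.succ]
    exact le_add_of_nonneg_right (hCpos _ _)
  rw [sub_nonpos]
  exact main_core m hC.sqrt
    (fun y => Real.exp (-(∑ i : Fin n, c i * Real.exp (y i.succ))))
    hGmeas hG0 hG1 hGmono
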